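/- In any globular set, if x ◁ y and dim(x) > dim(y), then either t(x) = y or t(x) ◁ y, where t(x) is the target of x. -/

import Mathlib

/-- A globular set, presented as a family of sets of `n`-cells with source and target maps
subject to the globular relations. -/
structure GlobSet : Type 1 where
  obj : ℕ → Type
  src : ∀ n, obj (n + 1) → obj n
  tgt : ∀ n, obj (n + 1) → obj n
  glob_ss : ∀ n (x : obj (n + 2)), src n (src (n + 1) x) = src n (tgt (n + 1) x)
  glob_tt : ∀ n (x : obj (n + 2)), tgt n (src (n + 1) x) = tgt n (tgt (n + 1) x)

/-- A morphism of globular sets. -/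
@[ext]
structure GlobHom (X Y : GlobSet) : Type where
  app : ∀ n, X.obj n → Y.obj n
  src_app : ∀ n x, app n (X.src n x) = Y.src n (app (n + 1) x)
  tgt_app : ∀ n x, app n (X.tgt n x) = Y.tgt n (app (n + 1) x)

namespace GlobSet

/-- The cells of a globular set (of all dimensions). -/
def Cell (X : GlobSet) : Type := Σ n, X.obj n

/-- One step of the relation `◁`: `s(x) ◁ x` and `x ◁ t(x)`. -/
inductive Step (X : GlobSet) : X.Cell → X.Cell → Prop
  | src (n : ℕ) (x : X.obj (n + 1)) : Step X ⟨n, X.src n x⟩ ⟨n + 1, x⟩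
  | tgt (n : ℕ) (x : X.obj (n + 1)) : Step X ⟨n + 1, x⟩ ⟨n, X.tgt n x⟩

/-- The relation `◁`: transitive closure of `s(x) ◁ x ◁ t(x)`. -/
def Rel (X : GlobSet) : X.Cell → X.Cell → Prop := Relation.TransGen (Step X)

/-- A globular set is `◁`-linear if `x ≠ y ↔ (x ◁ y ∨ y ◁ x)`. -/
def Linear (X : GlobSet) : Prop :=
  ∀ a b : X.Cell, a ≠ b ↔ (Rel X a b ∨ Rel X b a)

/-- Pasting schemes: the finite `◁`-linear globular sets
(by the Finster–Mimram characterization, these are exactly the globular sums of disks). -/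
def IsPastingScheme (X : GlobSet) : Prop :=
  Finite X.Cell ∧ Linear X

end GlobSet


/-- One step of taking targets downward in dimension. -/
def tdown (X : GlobSet) : X.Cell → X.Cell
  | ⟨0, x⟩ => ⟨0, x⟩
  | ⟨n+1, x⟩ => ⟨n, X.tgt n x⟩

lemma tdown_key (X : GlobSet) (j : ℕ) (z : X.obj (j+2)) :
    tdown X ⟨j+1, X.src (j+1) z⟩ = tdown X ⟨j+1, X.tgt (j+1) z⟩ := by
  simp only [tdown, X.glob_tt j z]
  rfl

lemma rel_tdown_aux {X : GlobSet} {a y : X.Cell} (h : X.Rel a y) :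
    ∀ m, y.1 ≤ m → m < a.1 →
      ((tdown X)^[a.1 - m] a = y ∨ X.Rel ((tdown X)^[a.1 - m] a) y) := by
  induction h using Relation.TransGen.head_induction_on with
  | single h =>
      intro m hm hlt
      cases h with
      | src k z => simp at hm hlt; omega
      | tgt k z =>
          have hmk : m = k := by simp at hm hlt; omega
          subst hmk
          have h1 : (m + 1) - m = 1 := by omega
          rw [h1]
          left
          rfl
  | head h' hR IH =>
      intro m hm hlt
      cases h' with
      | src k z =>
          have hlt' : m < k := by simpa using hlt
          obtain ⟨j, rfl⟩ : ∃ j, k = j + 1 := ⟨k - 1, by omega⟩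
          have hmj : m ≤ j := by omega
          have e1 : (j + 1) - m = (j - m) + 1 := by omega
          have e2 : (j + 2) - m = ((j - m) + 1) + 1 := by omega
          have := IH m hm (by simp; omega)
          erw [e2, Function.iterate_succ_apply] at this
          erw [e1, Function.iterate_succ_apply, tdown_key]
          exact this
      | tgt k z =>
          rcases Nat.lt_or_ge m k with hmk | hmk
          · have := IH m hm (by simpa using hmk)
            have e1 : (k + 1) - m = (k - m) + 1 := by omega
            erw [e1, Function.iterate_succ_apply]
            exact this
          · have hmk' : m = k := by simp at hlt; omega
            subst hmk'
            have e1 : (m + 1) - m = 1 := by omega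
            rw [e1]
            right
            exact hR

/-- In any globular set, if `x ◁ y` and `dim x > dim y`, then `t(x) = y` or `t(x) ◁ y`. -/
theorem rel_target_of_dim_gt {X : GlobSet} (n : ℕ) (x : X.obj (n + 1)) (y : X.Cell)
    (h : X.Rel ⟨n + 1, x⟩ y) (hdim : y.1 < n + 1) :
    (⟨n, X.tgt n x⟩ : X.Cell) = y ∨ X.Rel ⟨n, X.tgt n x⟩ y := by
  have := rel_tdown_aux h n (by omega) (by simp)
  simp [tdown] at this
  exact this
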